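/- There is no complex diagonalizable matrix A of size n×n, with n ≥ 5, whose exterior square Λ²A has eigenvalue multiset consisting of exactly one eigenvalue equal to s with s ≠ 1, and all remaining n(n-1)/2 − 1 eigenvalues equal to 1. -/

import Mathlib

open Polynomial

/-- Index set for the standard basis `eᵢ ∧ eⱼ` (`i < j`) of the exterior square. -/
def AltIdx (n : ℕ) := {p : Fin n × Fin n // p.1 < p.2}

instance (n : ℕ) : Fintype (AltIdx n) := Subtype.fintype _
instance (n : ℕ) : DecidableEq (AltIdx n) := Subtype.instDecidableEq

/-- The matrix of the induced endomorphism `Λ² A` on the exterior square, in the basis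
`eᵢ ∧ eⱼ` (`i < j`). -/
def altSq (n : ℕ) (A : Matrix (Fin n) (Fin n) ℂ) : Matrix (AltIdx n) (AltIdx n) ℂ :=
  fun r c => A r.1.1 c.1.1 * A r.1.2 c.1.2 - A r.1.2 c.1.1 * A r.1.1 c.1.2

open Matrix in
lemma diag_charpoly_roots {m : Type*} [Fintype m] [DecidableEq m] (e : m → ℂ) :
    (Matrix.diagonal e).charpoly.roots = Finset.univ.val.map e := by
  have h1 : charmatrix (Matrix.diagonal e) = Matrix.diagonal (fun i => X - C (e i)) := by
    ext i j
    by_cases h : i = j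
    · subst h; simp [charmatrix_apply_eq]
    · simp [charmatrix_apply_ne _ _ _ h, Matrix.diagonal_apply_ne _ h]
  rw [Matrix.charpoly, h1, Matrix.det_diagonal]
  have : (∏ i : m, (X - C (e i))) = ((Finset.univ.val.map e).map (fun a => X - C a)).prod := by
    rw [Multiset.map_map]; rfl
  rw [this, roots_multiset_prod_X_sub_C]

open Matrix in
lemma charpoly_conj' {m : Type*} [Fintype m] [DecidableEq m]
    (P : (Matrix m m ℂ)ˣ) (M : Matrix m m ℂ) :
    ((↑P⁻¹ : Matrix m m ℂ) * M * (↑P : Matrix m m ℂ)).charpoly = M.charpoly := by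
  have hinv : ((↑P⁻¹ : Matrix m m ℂ).map C) * ((↑P : Matrix m m ℂ).map C) = 1 := by
    rw [← Matrix.map_mul]; simp [Matrix.map_one]
  have hinv2 : ((↑P : Matrix m m ℂ).map C) * ((↑P⁻¹ : Matrix m m ℂ).map C) = 1 := by
    rw [← Matrix.map_mul]; simp [Matrix.map_one]
  have hcomm : ∀ N : Matrix m m ℂ[X], N * (scalar m X) = (scalar m X) * N := fun N =>
    (scalar_commute X (fun r => Commute.all X r) N).symm
  have hch : charmatrix ((↑P⁻¹ : Matrix m m ℂ) * M * (↑P : Matrix m m ℂ))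
      = ((↑P⁻¹ : Matrix m m ℂ).map C) * charmatrix M * ((↑P : Matrix m m ℂ).map C) := by
    unfold charmatrix
    rw [RingHom.mapMatrix_apply, RingHom.mapMatrix_apply, Matrix.map_mul, Matrix.map_mul,
      mul_sub, sub_mul]
    congr 1
    rw [hcomm, mul_assoc, hinv, mul_one]
  rw [Matrix.charpoly, Matrix.charpoly, hch, Matrix.det_mul, Matrix.det_mul]
  have : ((↑P⁻¹ : Matrix m m ℂ).map C).det * ((↑P : Matrix m m ℂ).map C).det = 1 := by
    rw [← Matrix.det_mul, hinv, Matrix.det_one]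
  calc ((↑P⁻¹ : Matrix m m ℂ).map C).det * (charmatrix M).det * ((↑P : Matrix m m ℂ).map C).det
      = ((↑P⁻¹ : Matrix m m ℂ).map C).det * ((↑P : Matrix m m ℂ).map C).det
        * (charmatrix M).det := by ring
    _ = (charmatrix M).det := by rw [this, one_mul]

lemma altSq_mul (n : ℕ) (A B : Matrix (Fin n) (Fin n) ℂ) :
    altSq n (A * B) = altSq n A * altSq n B := by
  ext r c
  obtain ⟨⟨r1, r2⟩, hr⟩ := r
  obtain ⟨⟨c1, c2⟩, hc⟩ := c
  set F : Fin n × Fin n → ℂ :=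
    fun q => (A r1 q.1 * A r2 q.2 - A r2 q.1 * A r1 q.2) * (B q.1 c1 * B q.2 c2) with hF
  have h0 : ∀ q : Fin n × Fin n, q.1 = q.2 → F q = 0 := by
    rintro ⟨k, l⟩ (h : k = l); subst h; simp only [hF]; ring
  have hL : altSq n (A * B) ⟨(r1, r2), hr⟩ ⟨(c1, c2), hc⟩ = ∑ q : Fin n × Fin n, F q := by
    rw [Fintype.sum_prod_type]
    simp only [altSq, Matrix.mul_apply, Finset.sum_mul_sum, ← Finset.sum_sub_distrib]
    refine Finset.sum_congr rfl fun k _ => Finset.sum_congr rfl fun l _ => ?_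
    simp only [hF]; ring
  have hR : (altSq n A * altSq n B) ⟨(r1, r2), hr⟩ ⟨(c1, c2), hc⟩
      = ∑ q ∈ Finset.univ.filter (fun q : Fin n × Fin n => q.1 < q.2), (F q + F q.swap) := by
    have hterm : ∀ j : AltIdx n, altSq n A ⟨(r1, r2), hr⟩ j * altSq n B j ⟨(c1, c2), hc⟩
        = F j.1 + F j.1.swap := by
      rintro ⟨⟨k, l⟩, hkl⟩
      simp only [altSq, hF, Prod.swap]; ring
    refine (Matrix.mul_apply).trans ?_
    rw [Finset.sum_congr rfl (fun j _ => hterm j)]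
    exact (Finset.sum_subtype (Finset.univ.filter (fun q : Fin n × Fin n => q.1 < q.2))
      (fun q => by simp) (fun q => F q + F q.swap)).symm
  rw [hL, hR, Finset.sum_add_distrib]
  have hswap : ∑ q ∈ Finset.univ.filter (fun q : Fin n × Fin n => q.1 < q.2), F q.swap
      = ∑ q ∈ Finset.univ.filter (fun q : Fin n × Fin n => q.2 < q.1), F q := by
    refine Finset.sum_equiv (Equiv.prodComm (Fin n) (Fin n)) (fun q => by simp) (fun q _ => rfl)
  rw [hswap]
  rw [← Finset.sum_filter_add_sum_filter_not Finset.univ (fun q : Fin n × Fin n => q.1 < q.2) F]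
  congr 1
  rw [← Finset.sum_filter_add_sum_filter_not
    (Finset.univ.filter (fun q : Fin n × Fin n => ¬ q.1 < q.2))
    (fun q : Fin n × Fin n => q.2 < q.1) F]
  have h1 : (Finset.univ.filter (fun q : Fin n × Fin n => ¬ q.1 < q.2)).filter
      (fun q : Fin n × Fin n => q.2 < q.1)
      = Finset.univ.filter (fun q : Fin n × Fin n => q.2 < q.1) := by
    ext q; simp only [Finset.mem_filter, Finset.mem_univ, true_and]
    constructor
    · tauto
    · intro h; exact ⟨fun h' => absurd h (asymm h'), h⟩
  have h2 : ∑ q ∈ (Finset.univ.filter (fun q : Fin n × Fin n => ¬ q.1 < q.2)).filter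
      (fun q : Fin n × Fin n => ¬ q.2 < q.1), F q = 0 := by
    refine Finset.sum_eq_zero fun q hq => ?_
    simp only [Finset.mem_filter] at hq
    exact h0 q (le_antisymm (not_lt.1 hq.2) (not_lt.1 hq.1.2))
  rw [h1, h2, add_zero]

lemma altSq_diagonal (n : ℕ) (d : Fin n → ℂ) :
    altSq n (Matrix.diagonal d) = Matrix.diagonal (fun r : AltIdx n => d r.1.1 * d r.1.2) := by
  ext r c
  obtain ⟨⟨r1, r2⟩, hr⟩ := r
  obtain ⟨⟨c1, c2⟩, hc⟩ := c
  simp only at hr hc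
  have hne : ¬ (r2 = c1 ∧ r1 = c2) := by
    rintro ⟨rfl, rfl⟩
    exact absurd (hr.trans hc) (lt_irrefl _)
  have hzero : Matrix.diagonal d r2 c1 * Matrix.diagonal d r1 c2 = 0 := by
    rcases not_and_or.1 hne with h | h
    · rw [Matrix.diagonal_apply_ne _ h, zero_mul]
    · rw [Matrix.diagonal_apply_ne _ h, mul_zero]
  show Matrix.diagonal d r1 c1 * Matrix.diagonal d r2 c2
      - Matrix.diagonal d r2 c1 * Matrix.diagonal d r1 c2 = _
  rw [hzero, sub_zero]
  by_cases h1 : r1 = c1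
  · by_cases h2 : r2 = c2
    · subst h1; subst h2
      rw [Matrix.diagonal_apply_eq, Matrix.diagonal_apply_eq]
      exact (Matrix.diagonal_apply_eq (fun r : AltIdx n => d r.1.1 * d r.1.2) (⟨(r1, r2), hr⟩ : AltIdx n)).symm
    · have hne' : (⟨(r1, r2), hr⟩ : AltIdx n) ≠ ⟨(c1, c2), hc⟩ :=
        fun h => h2 (congrArg (fun x : AltIdx n => x.1.2) h)
      rw [Matrix.diagonal_apply_ne _ h2, mul_zero]
      exact (Matrix.diagonal_apply_ne _ hne').symm
  · have hne' : (⟨(r1, r2), hr⟩ : AltIdx n) ≠ ⟨(c1, c2), hc⟩ :=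
      fun h => h1 (congrArg (fun x : AltIdx n => x.1.1) h)
    rw [Matrix.diagonal_apply_ne _ h1, zero_mul]
    exact (Matrix.diagonal_apply_ne _ hne').symm

lemma altSq_one (n : ℕ) : altSq n 1 = 1 := by
  have := altSq_diagonal n (fun _ => 1)
  rw [Matrix.diagonal_one] at this
  rw [this]
  ext r c
  by_cases h : r = c
  · subst h; rw [Matrix.diagonal_apply_eq]; simp
  · rw [Matrix.diagonal_apply_ne _ h, Matrix.one_apply_ne h]

lemma combinatorial_core (n : ℕ) (hn : 5 ≤ n) (d : Fin n → ℂ) (s : ℂ) (hs : s ≠ 1)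
    (p0 : AltIdx n) (hp0 : d p0.1.1 * d p0.1.2 = s)
    (key : ∀ p : AltIdx n, p ≠ p0 → d p.1.1 * d p.1.2 = 1) : False := by
  obtain ⟨⟨i0, j0⟩, hij⟩ := p0
  simp only at hp0 hij
  have pairkey : ∀ i j : Fin n, (h : i < j) → (i, j) ≠ (i0, j0) → d i * d j = 1 := by
    intro i j h hne
    exact key ⟨(i, j), h⟩ (fun he => hne (congrArg Subtype.val he))
  have ukey : ∀ i j : Fin n, i ≠ j → (i ≠ i0 ∧ i ≠ j0) ∨ (j ≠ i0 ∧ j ≠ j0) →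
      d i * d j = 1 := by
    intro i j hij' hnot
    rcases lt_or_gt_of_ne hij' with h | h
    · refine pairkey i j h fun he => ?_
      rw [Prod.mk.injEq] at he
      rcases hnot with ⟨h1, _⟩ | ⟨_, h2⟩
      · exact h1 he.1
      · exact h2 he.2
    · rw [mul_comm]
      refine pairkey j i h fun he => ?_
      rw [Prod.mk.injEq] at he
      rcases hnot with ⟨_, h2⟩ | ⟨h1, _⟩
      · exact h2 he.2
      · exact h1 he.1
  have hcard : 2 < ((Finset.univ : Finset (Fin n)) \ {i0, j0}).card := by
    have h1 : ((Finset.univ : Finset (Fin n)) \ {i0, j0}).card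
        ≥ Finset.univ.card - ({i0, j0} : Finset (Fin n)).card := Finset.le_card_sdiff _ _
    have h2 : ({i0, j0} : Finset (Fin n)).card ≤ 2 := Finset.card_insert_le _ _ |>.trans (by simp)
    have h3 : (Finset.univ : Finset (Fin n)).card = n := Finset.card_fin n
    omega
  obtain ⟨a, b, c, ha, hb, hc, hab, hac, hbc⟩ := Finset.two_lt_card_iff.1 hcard
  simp only [Finset.mem_sdiff, Finset.mem_univ, true_and, Finset.mem_insert,
    Finset.mem_singleton, not_or] at ha hb hc
  have e1 : d i0 * d a = 1 := ukey i0 a (fun h => ha.1 h.symm) (Or.inr ⟨ha.1, ha.2⟩)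
  have e2 : d j0 * d a = 1 := ukey j0 a (fun h => ha.2 h.symm) (Or.inr ⟨ha.1, ha.2⟩)
  have e3 : d a * d b = 1 := ukey a b hab (Or.inl ⟨ha.1, ha.2⟩)
  have e4 : d a * d c = 1 := ukey a c hac (Or.inl ⟨ha.1, ha.2⟩)
  have e5 : d b * d c = 1 := ukey b c hbc (Or.inl ⟨hb.1, hb.2⟩)
  have ha0 : d a ≠ 0 := fun h => by rw [h, zero_mul] at e3; exact one_ne_zero e3.symm
  have hib : d i0 = d b := by
    apply mul_right_cancel₀ ha0
    rw [e1, mul_comm] at *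
    rw [← e3, mul_comm]
  have hjc : d j0 = d c := by
    apply mul_right_cancel₀ ha0
    rw [e2, ← e4, mul_comm]
  rw [hib, hjc, e5] at hp0
  exact hs hp0.symm

lemma multiset_extract {α : Type*} [Fintype α] [DecidableEq α] (f : α → ℂ) (s : ℂ)
    (hs : s ≠ 1) (m : ℕ) (h : Finset.univ.val.map f = s ::ₘ Multiset.replicate m 1) :
    ∃ p0 : α, f p0 = s ∧ ∀ p, p ≠ p0 → f p = 1 := by
  classical
  have hf : Multiset.filter (fun x : ℂ => x ≠ 1) (Finset.univ.val.map f) = {s} := by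
    have h1 : Multiset.filter (fun x : ℂ => x ≠ 1) (Multiset.replicate m 1) = 0 :=
      Multiset.filter_eq_nil.2 (fun a haa => by
        rw [Multiset.eq_of_mem_replicate haa]; simp)
    rw [h, Multiset.filter_cons, h1, add_zero, if_pos hs]
  rw [Multiset.filter_map] at hf
  have hcard : Multiset.card (Multiset.filter ((fun x : ℂ => x ≠ 1) ∘ f) Finset.univ.val) = 1 := by
    have := congrArg Multiset.card hf
    rwa [Multiset.card_map, Multiset.card_singleton] at this
  obtain ⟨p0, hp0⟩ := Multiset.card_eq_one.1 hcard
  refine ⟨p0, ?_, ?_⟩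
  · rw [hp0, Multiset.map_singleton, Multiset.singleton_inj] at hf
    exact hf
  · intro p hne
    by_contra hne1
    have : p ∈ Multiset.filter ((fun x : ℂ => x ≠ 1) ∘ f) Finset.univ.val :=
      Multiset.mem_filter.2 ⟨Finset.mem_univ p, hne1⟩
    rw [hp0, Multiset.mem_singleton] at this
    exact hne this

/-- For `n ≥ 5`, no diagonalizable `n × n` complex matrix `A` has an exterior square
whose eigenvalue multiset consists of exactly one eigenvalue `s ≠ 1` and all remaining
`n(n-1)/2 - 1` eigenvalues equal to `1`. -/
theorem stmt6 (n : ℕ) (hn : 5 ≤ n) (A : Matrix (Fin n) (Fin n) ℂ)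
    (hdiag : ∃ P : (Matrix (Fin n) (Fin n) ℂ)ˣ, ∃ d : Fin n → ℂ,
      (↑P⁻¹ : Matrix (Fin n) (Fin n) ℂ) * A * (↑P : Matrix (Fin n) (Fin n) ℂ)
        = Matrix.diagonal d)
    (s : ℂ) (hs : s ≠ 1) :
    ¬ (altSq n A).charpoly.roots = s ::ₘ Multiset.replicate (n * (n - 1) / 2 - 1) 1 := by
  intro h
  obtain ⟨P, d, hPd⟩ := hdiag
  have hQvi : altSq n (↑P) * altSq n (↑P⁻¹) = 1 := by
    rw [← altSq_mul, Units.mul_inv, altSq_one]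
  have hQiv : altSq n (↑P⁻¹) * altSq n (↑P) = 1 := by
    rw [← altSq_mul, Units.inv_mul, altSq_one]
  let Q : (Matrix (AltIdx n) (AltIdx n) ℂ)ˣ :=
    ⟨altSq n (↑P), altSq n (↑P⁻¹), hQvi, hQiv⟩
  have hconj : (↑Q⁻¹ : Matrix (AltIdx n) (AltIdx n) ℂ) * altSq n A
      * (↑Q : Matrix (AltIdx n) (AltIdx n) ℂ) = altSq n (Matrix.diagonal d) := by
    show altSq n (↑P⁻¹) * altSq n A * altSq n (↑P) = _
    rw [← altSq_mul, ← altSq_mul, hPd]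
  have hch : (altSq n A).charpoly
      = (Matrix.diagonal (fun r : AltIdx n => d r.1.1 * d r.1.2)).charpoly := by
    rw [← altSq_diagonal, ← hconj, charpoly_conj']
  rw [hch, diag_charpoly_roots] at h
  obtain ⟨p0, hp0, key⟩ :=
    multiset_extract (fun r : AltIdx n => d r.1.1 * d r.1.2) s hs _ h
  exact combinatorial_core n hn d s hs p0 hp0 key
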